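/- Let p₁=(ζ₁,v₁) and p₂=(ζ₂,v₂) be points of the quaternionic Heisenberg group 𝓗 with ζ₁ ≠ 0 and ζ₂ ≠ 0. Then equality ρ₀(p₁,p₂)² = ((|ζ₁|²+|ζ₂|²)² + |v₁−v₂|²)^{1/2} + 2|ζ₁|·|ζ₂| holds if and only if there exists a real number λ ≤ 0 such that |ζ₁|² + |ζ₂|² + v₁ − v₂ = 2λ·ζ̄₂ζ₁ (an equation in ℍ). -/

import Mathlib

open Quaternion Real

noncomputable section

/-- The Cygan distance on the quaternionic Heisenberg group `𝓗 = ℍ × Im ℍ`: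
`ρ₀((ζ₁,v₁),(ζ₂,v₂)) = | |ζ₁−ζ₂|² + v₁−v₂−2·Im(ζ̄₂ζ₁) |^{1/2}`, the outer `|·|`
being the quaternionic norm. -/
def cygan (ζ₁ v₁ ζ₂ v₂ : ℍ) : ℝ :=
  Real.sqrt ‖((‖ζ₁ - ζ₂‖ ^ 2 : ℝ) : ℍ) + v₁ - v₂ - 2 * (star ζ₂ * ζ₁).im‖

/-- Equality in the Cygan distance estimate holds iff
`|ζ₁|² + |ζ₂|² + v₁ − v₂ = 2λ·ζ̄₂ζ₁` for some real `λ ≤ 0`. -/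
theorem cygan_sq_eq_iff
    (ζ₁ v₁ ζ₂ v₂ : ℍ) (hv₁ : v₁.re = 0) (hv₂ : v₂.re = 0)
    (hζ₁ : ζ₁ ≠ 0) (hζ₂ : ζ₂ ≠ 0) :
    cygan ζ₁ v₁ ζ₂ v₂ ^ 2 =
        Real.sqrt ((‖ζ₁‖ ^ 2 + ‖ζ₂‖ ^ 2) ^ 2 + ‖v₁ - v₂‖ ^ 2) + 2 * ‖ζ₁‖ * ‖ζ₂‖ ↔
      ∃ l : ℝ, l ≤ 0 ∧
        ((‖ζ₁‖ ^ 2 + ‖ζ₂‖ ^ 2 : ℝ) : ℍ) + v₁ - v₂ = (2 * l) • (star ζ₂ * ζ₁) := by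
  set w : ℍ := star ζ₂ * ζ₁ with hw
  set q : ℍ := ((‖ζ₁‖ ^ 2 + ‖ζ₂‖ ^ 2 : ℝ) : ℍ) + v₁ - v₂ with hq
  have hwne : w ≠ 0 := mul_ne_zero (star_ne_zero.2 hζ₂) hζ₁
  have hζ₁pos : (0:ℝ) < ‖ζ₁‖ ^ 2 := pow_pos (norm_pos_iff.2 hζ₁) 2
  have hζ₂pos : (0:ℝ) < ‖ζ₂‖ ^ 2 := pow_pos (norm_pos_iff.2 hζ₂) 2
  have hqre : q.re = ‖ζ₁‖ ^ 2 + ‖ζ₂‖ ^ 2 := by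
    rw [hq]
    simp only [Quaternion.re_add, Quaternion.re_sub, Quaternion.re_coe, hv₁, hv₂]
    ring
  have hqne : q ≠ 0 := by
    intro h
    rw [h] at hqre
    simp only [Quaternion.re_zero] at hqre
    nlinarith
  have hc2 : ((2:ℝ):ℍ) = 2 := by norm_cast
  have h2ne : (2:ℍ) ≠ 0 := by
    have := Quaternion.coe_injective.ne (two_ne_zero (α := ℝ))
    rwa [hc2, Quaternion.coe_zero] at this
  have h2w : (2:ℍ) * w = (2:ℝ) • w := by
    rw [← Quaternion.coe_mul_eq_smul, hc2]
  -- rewrite the norm of the difference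
  have hsub : (‖ζ₁ - ζ₂‖ ^ 2 : ℝ) = ‖ζ₁‖ ^ 2 + ‖ζ₂‖ ^ 2 - 2 * w.re := by
    have h1 : ‖ζ₁ - ζ₂‖ ^ 2 = ‖ζ₁‖ ^ 2 - 2 * (inner ℝ ζ₁ ζ₂ : ℝ) + ‖ζ₂‖ ^ 2 :=
      norm_sub_sq_real ζ₁ ζ₂
    have h2 : (inner ℝ ζ₁ ζ₂ : ℝ) = w.re := by
      rw [Quaternion.inner_def, hw]
      simp [Quaternion.re_mul]
      ring
    rw [h1, h2]; ring
  -- the quaternion inside the Cygan norm equals q - 2*w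
  have hX : ((‖ζ₁ - ζ₂‖ ^ 2 : ℝ) : ℍ) + v₁ - v₂ - 2 * w.im = q - 2 * w := by
    have h3 : (2 : ℍ) * w = ((2 * w.re : ℝ) : ℍ) + 2 * w.im := by
      conv_lhs => rw [← w.re_add_im]
      push_cast
      rw [hc2, mul_add]
    rw [hsub, h3, hq]
    push_cast
    abel
  have hcyg : cygan ζ₁ v₁ ζ₂ v₂ ^ 2 = ‖q - 2 * w‖ := by
    rw [cygan, hX, Real.sq_sqrt (norm_nonneg _)]
  -- the square-root term equals ‖q‖
  have hnq : Real.sqrt ((‖ζ₁‖ ^ 2 + ‖ζ₂‖ ^ 2) ^ 2 + ‖v₁ - v₂‖ ^ 2) = ‖q‖ := by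
    have h4 : (‖ζ₁‖ ^ 2 + ‖ζ₂‖ ^ 2) ^ 2 + ‖v₁ - v₂‖ ^ 2 = ‖q‖ ^ 2 := by
      have e1 : ‖q‖ ^ 2 = normSq q := by rw [sq, ← normSq_eq_norm_mul_self]
      have e2 : ‖v₁ - v₂‖ ^ 2 = normSq (v₁ - v₂) := by rw [sq, ← normSq_eq_norm_mul_self]
      rw [e1, e2, Quaternion.normSq_def', Quaternion.normSq_def', hq]
      simp only [Quaternion.re_add, Quaternion.re_sub, Quaternion.imI_add,
        Quaternion.imI_sub, Quaternion.imJ_add, Quaternion.imJ_sub, Quaternion.imK_add,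
        Quaternion.imK_sub, Quaternion.re_coe, Quaternion.imI_coe, Quaternion.imJ_coe,
        Quaternion.imK_coe, hv₁, hv₂]
      ring
    rw [h4, Real.sqrt_sq (norm_nonneg _)]
  -- the product term equals ‖2*w‖
  have hnw : 2 * ‖ζ₁‖ * ‖ζ₂‖ = ‖(2:ℍ) * w‖ := by
    rw [norm_mul, hw, norm_mul, Quaternion.norm_star, ← hc2, Quaternion.norm_coe]
    simp [Real.norm_eq_abs]
    ring
  rw [hcyg, hnq, hnw]
  -- reduce to the SameRay characterization
  have key : ‖q - 2 * w‖ = ‖q‖ + ‖(2:ℍ) * w‖ ↔ SameRay ℝ q (-(2 * w)) := by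
    rw [sub_eq_add_neg, ← norm_neg ((2:ℍ) * w), sameRay_iff_norm_add]
  rw [key]
  constructor
  · intro h
    have hne : -(2 * w) ≠ (0:ℍ) := neg_ne_zero.2 (mul_ne_zero h2ne hwne)
    obtain ⟨r, hr, hrq⟩ := h.exists_pos_left hqne hne
    have hrinv : (0:ℝ) < r⁻¹ := inv_pos.2 hr
    refine ⟨-r⁻¹, by linarith, ?_⟩
    have h5 : q = r⁻¹ • (-(2 * w)) := by
      rw [← hrq, smul_smul, inv_mul_cancel₀ (ne_of_gt hr), one_smul]
    rw [h5, h2w, smul_neg, smul_smul, ← neg_smul]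
    congr 1
    ring
  · rintro ⟨l, hl, hql⟩
    have h1 : q = (-(2 * l)) • (-w) := by rw [hql, smul_neg, neg_smul, neg_neg]
    have h2 : -(2 * w) = (2:ℝ) • (-w) := by rw [h2w, ← smul_neg]
    rw [h1, h2]
    exact ((SameRay.refl (-w)).nonneg_smul_left (by linarith)).nonneg_smul_right (by norm_num)
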